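/- If G is a partial cube with minimum degree δ, then the domination number of G satisfies γ(G) ≥ ⌈δ/2⌉. -/

import Mathlib

open SimpleGraph

/-- The `n`-dimensional hypercube: vertices are binary strings of length `n`,
adjacent iff they differ in exactly one bit (Hamming distance 1). -/
def Qcube (n : ℕ) : SimpleGraph (Fin n → Bool) where
  Adj x y := hammingDist x y = 1
  symm := ⟨fun x y h => by show hammingDist y x = 1; rwa [hammingDist_comm]⟩
  loopless := ⟨fun x h => by simp [hammingDist_self] at h⟩

lemma hd_one_iff {n : ℕ} (a b : Fin n → Bool) :
    hammingDist a b = 1 ↔ ∃ k, a k ≠ b k ∧ ∀ j, j ≠ k → a j = b j := by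
  rw [hammingDist, Finset.card_eq_one]
  constructor
  · rintro ⟨k, hk⟩
    refine ⟨k, ?_, ?_⟩
    · have : k ∈ ({i | a i ≠ b i} : Finset (Fin n)) := hk ▸ Finset.mem_singleton_self k
      simpa using this
    · intro j hj
      by_contra hne
      have : j ∈ ({i | a i ≠ b i} : Finset (Fin n)) := by simpa using hne
      rw [hk, Finset.mem_singleton] at this
      exact hj this
  · rintro ⟨k, hk, hj⟩
    refine ⟨k, ?_⟩
    ext i
    simp only [Finset.mem_filter, Finset.mem_univ, true_and, Finset.mem_singleton]
    constructor
    · intro h; by_contra h'; exact h (hj i h')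
    · rintro rfl; exact hk

lemma bool_trans {a b c : Bool} (h1 : a ≠ b) (h2 : c ≠ b) : a = c := by
  cases a <;> cases b <;> cases c <;> simp_all

lemma flip_eq {n : ℕ} {a c b : Fin n → Bool} {k : Fin n}
    (hak : a k ≠ b k) (ha : ∀ j, j ≠ k → a j = b j)
    (hck : c k ≠ b k) (hc : ∀ j, j ≠ k → c j = b j) : a = c := by
  funext j
  by_cases hj : j = k
  · subst hj; exact bool_trans hak hck
  · rw [ha j hj, hc j hj]

lemma supp_two {n : ℕ} {u w x : Fin n → Bool} {k : Fin n}
    (hxk : x k ≠ w k) (hx : ∀ j, j ≠ k → x j = w j)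
    (hne : u ≠ w) (hd : hammingDist u x = 1) :
    ∃ m, m ≠ k ∧ u k ≠ w k ∧ u m ≠ w m ∧ ∀ j, j ≠ k → j ≠ m → u j = w j := by
  obtain ⟨m, hm, hmj⟩ := (hd_one_iff u x).mp hd
  by_cases hmk : m = k
  · subst hmk
    exfalso; apply hne; funext j
    by_cases hj : j = m
    · subst hj; exact bool_trans hm (Ne.symm hxk)
    · rw [hmj j hj, hx j hj]
  · refine ⟨m, hmk, ?_, ?_, ?_⟩
    · rw [hmj k (fun h => hmk h.symm)]; exact hxk
    · have h' : x m = w m := hx m hmk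
      rw [← h']; exact hm
    · intro j hjk hjm; rw [hmj j hjm, hx j hjk]

lemma key_aux {n : ℕ} {u w x : Fin n → Bool} {k k' : Fin n}
    (huk : u k ≠ w k) (huj : ∀ j, j ≠ k → u j = w j)
    (hxk : x k' ≠ w k') (hxj : ∀ j, j ≠ k' → x j = w j)
    (hne : u ≠ w) (hd : hammingDist u x = 1) : False := by
  obtain ⟨m, hmk, h_uk, h_um, _⟩ := supp_two hxk hxj hne hd
  have e1 : k' = k := by by_contra h; exact h_uk (huj k' h)
  have e2 : m = k := by by_contra h; exact h_um (huj m h)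
  exact hmk (e2.trans e1.symm)

lemma key {n : ℕ} {u w x₁ x₂ x₃ : Fin n → Bool} (hne : u ≠ w)
    (h1 : hammingDist x₁ w = 1) (h2 : hammingDist x₂ w = 1) (h3 : hammingDist x₃ w = 1)
    (d1 : x₁ = u ∨ hammingDist u x₁ = 1)
    (d2 : x₂ = u ∨ hammingDist u x₂ = 1)
    (d3 : x₃ = u ∨ hammingDist u x₃ = 1)
    (n12 : x₁ ≠ x₂) (n13 : x₁ ≠ x₃) (n23 : x₂ ≠ x₃) : False := by
  obtain ⟨k₁, hk₁, hj₁⟩ := (hd_one_iff _ _).mp h1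
  obtain ⟨k₂, hk₂, hj₂⟩ := (hd_one_iff _ _).mp h2
  obtain ⟨k₃, hk₃, hj₃⟩ := (hd_one_iff _ _).mp h3
  have hk12 : k₁ ≠ k₂ := fun h => n12 (by subst h; exact flip_eq hk₁ hj₁ hk₂ hj₂)
  have hk13 : k₁ ≠ k₃ := fun h => n13 (by subst h; exact flip_eq hk₁ hj₁ hk₃ hj₃)
  have hk23 : k₂ ≠ k₃ := fun h => n23 (by subst h; exact flip_eq hk₂ hj₂ hk₃ hj₃)
  rcases d1 with rfl | d1
  · rcases d2 with rfl | d2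
    · exact n12 rfl
    · exact key_aux hk₁ hj₁ hk₂ hj₂ hne d2
  rcases d2 with rfl | d2
  · exact key_aux hk₂ hj₂ hk₁ hj₁ hne d1
  rcases d3 with rfl | d3
  · exact key_aux hk₃ hj₃ hk₁ hj₁ hne d1
  obtain ⟨m₁, hm₁k, hu_k₁, hu_m₁, hout₁⟩ := supp_two hk₁ hj₁ hne d1
  obtain ⟨m₂, hm₂k, hu_k₂, _, _⟩ := supp_two hk₂ hj₂ hne d2
  obtain ⟨m₃, hm₃k, hu_k₃, _, _⟩ := supp_two hk₃ hj₃ hne d3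
  have e2 : k₂ = m₁ := by
    by_contra h; exact hu_k₂ (hout₁ k₂ (Ne.symm hk12) h)
  have e3 : k₃ = m₁ := by
    by_contra h; exact hu_k₃ (hout₁ k₃ (Ne.symm hk13) h)
  exact hk23 (e2.trans e3.symm)

/-- If `G` is a partial cube with minimum degree `δ`, then the domination number
of `G` satisfies `γ(G) ≥ ⌈δ/2⌉`. -/
theorem stmt5 (n : ℕ) (S : Set (Fin n → Bool)) [Fintype ↥S]
    [DecidableRel ((Qcube n).induce S).Adj]
    (hconn : ((Qcube n).induce S).Connected)
    (hiso : ∀ u v : ↥S, ((Qcube n).induce S).dist u v = (Qcube n).dist u.val v.val) :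
    (((Qcube n).induce S).minDegree + 1) / 2 ≤
      sInf {k : ℕ | ∃ D : Set ↥S,
        (∀ v : ↥S, v ∈ D ∨ ∃ u ∈ D, ((Qcube n).induce S).Adj u v) ∧ D.ncard = k} := by
  classical
  have key_bound : ∀ D : Set ↥S,
      (∀ v : ↥S, v ∈ D ∨ ∃ u ∈ D, ((Qcube n).induce S).Adj u v) → ((Qcube n).induce S).minDegree ≤ 2 * D.ncard := by
    intro D hdom
    haveI : Nonempty ↥S := hconn.nonempty
    obtain ⟨v, hv⟩ := ((Qcube n).induce S).exists_minimal_degree_vertex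
    by_cases h0 : ((Qcube n).induce S).minDegree = 0
    · omega
    have hdpos : 0 < ((Qcube n).induce S).degree v := by omega
    have hneV : (((Qcube n).induce S).neighborFinset v).Nonempty := by
      rw [← Finset.card_pos, ((Qcube n).induce S).card_neighborFinset_eq_degree v]
      exact hdpos
    by_cases hsub : ∀ w ∈ ((Qcube n).induce S).neighborFinset v, w ∈ D
    · have h1 : (((Qcube n).induce S).neighborFinset v).card ≤ D.toFinset.card :=
        Finset.card_le_card (fun w hw => Set.mem_toFinset.mpr (hsub w hw))
      have h2 : (((Qcube n).induce S).neighborFinset v).card = ((Qcube n).induce S).degree v := rfl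
      have h3 : D.ncard = D.toFinset.card := Set.ncard_eq_toFinset_card' D
      omega
    · push_neg at hsub
      obtain ⟨w, hwv, hwD⟩ := hsub
      have hex : ∀ x : ↥S, ∃ u : ↥S, u ∈ D ∧ (u = x ∨ ((Qcube n).induce S).Adj u x) := by
        intro x
        rcases hdom x with h | ⟨u, hu, hadj⟩
        exacts [⟨x, h, Or.inl rfl⟩, ⟨u, hu, Or.inr hadj⟩]
      choose f hfD hfadj using hex
      have hadjX : ∀ {x : ↥S}, x ∈ ((Qcube n).induce S).neighborFinset w →
          hammingDist (x : Fin n → Bool) (w : Fin n → Bool) = 1 := by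
        intro x hx
        have h := (((Qcube n).induce S).mem_neighborFinset w x).mp hx
        simp only [comap_adj, Qcube] at h
        rwa [hammingDist_comm]
      have hfib : ∀ u ∈ D.toFinset,
          ((((Qcube n).induce S).neighborFinset w).filter fun x => f x = u).card ≤ 2 := by
        intro u hu
        by_contra hgt
        push_neg at hgt
        obtain ⟨x₁, x₂, x₃, hx₁, hx₂, hx₃, n12, n13, n23⟩ := Finset.two_lt_card_iff.mp hgt
        simp only [Finset.mem_filter] at hx₁ hx₂ hx₃
        have hduw : (u : Fin n → Bool) ≠ (w : Fin n → Bool) := by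
          intro h
          exact hwD (Subtype.ext h ▸ Set.mem_toFinset.mp hu)
        have dom : ∀ {x : ↥S}, f x = u →
            ((x : Fin n → Bool) = u ∨ hammingDist (u : Fin n → Bool) x = 1) := by
          intro x hfx
          rcases hfadj x with h | h
          · left; exact congrArg Subtype.val (hfx ▸ h).symm
          · right
            have h' : ((Qcube n).induce S).Adj u x := hfx ▸ h
            simpa only [comap_adj, Qcube, Function.Embedding.subtype_apply] using h'
        exact key hduw (hadjX hx₁.1) (hadjX hx₂.1) (hadjX hx₃.1)
          (dom hx₁.2) (dom hx₂.2) (dom hx₃.2)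
          (fun h => n12 (Subtype.ext h)) (fun h => n13 (Subtype.ext h))
          (fun h => n23 (Subtype.ext h))
      have himg : ∀ x ∈ ((Qcube n).induce S).neighborFinset w, f x ∈ D.toFinset :=
        fun x _ => Set.mem_toFinset.mpr (hfD x)
      have hcount := Finset.card_le_mul_card_image_of_maps_to himg 2 hfib
      have h1 : ((Qcube n).induce S).minDegree ≤ ((Qcube n).induce S).degree w := ((Qcube n).induce S).minDegree_le_degree w
      have h2 : ((Qcube n).induce S).degree w = (((Qcube n).induce S).neighborFinset w).card := rfl
      have h3 : D.ncard = D.toFinset.card := Set.ncard_eq_toFinset_card' D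
      omega
  refine le_csInf ⟨(Set.univ : Set ↥S).ncard, Set.univ, fun v => Or.inl (Set.mem_univ v), rfl⟩ ?_
  rintro k ⟨D, hdom, rfl⟩
  have := key_bound D hdom
  omega
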